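/- Let n ≥ 1, ℓ = 2^n - 1, and let (g_1,…,g_ℓ) be squarefree, pairwise coprime positive integers, each g_i > 1. Index nonzero vectors v_1,…,v_ℓ of 𝔽_2^n by binary expansion, and set a_j = ∏_{i : v_i · e_j = 1} g_i for j = 1,…,n where e_j is the j-th standard basis vector. Then the classes of a_1,…,a_n in ℚ^×/(ℚ^×)² are linearly independent over 𝔽_2. -/

import Mathlib

theorem stmt_10 (n : ℕ) (hn : 1 ≤ n) (g : Fin (2 ^ n - 1) → ℕ)
    (hsf : ∀ i, Squarefree (g i))
    (hcop : ∀ i j, i ≠ j → Nat.Coprime (g i) (g j))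
    (hg : ∀ i, 1 < g i)
    -- `a j = ∏_{i : v_i · e_j = 1} g_i`, where the nonzero vector `v_i ∈ 𝔽₂ⁿ`
    -- is the binary expansion of `i + 1`, so `v_i · e_j = 1` iff bit `j` of `i+1` is set
    (a : Fin n → ℕ)
    (ha : ∀ j : Fin n,
      a j = ∏ i ∈ Finset.univ.filter
        (fun i : Fin (2 ^ n - 1) => Nat.testBit ((i : ℕ) + 1) (j : ℕ)), g i)
    (J : Finset (Fin n)) (hJ : IsSquare (∏ j ∈ J, a j)) : J = ∅ := by
  by_contra hJne
  obtain ⟨j0, hj0⟩ := Finset.nonempty_iff_ne_empty.2 hJne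
  have hgne : ∀ i, g i ≠ 0 := fun i => by have := hg i; omega
  have hane : ∀ j, a j ≠ 0 := by
    intro j
    rw [ha j]
    exact Finset.prod_ne_zero_iff.2 fun i _ => hgne i
  -- the index i0 with i0 + 1 = 2^(j0 : ℕ)
  have h1 : 2 ^ (j0 : ℕ) < 2 ^ n := Nat.pow_lt_pow_right one_lt_two j0.2
  have h0 : 1 ≤ 2 ^ (j0 : ℕ) := Nat.one_le_two_pow
  have hlt : 2 ^ (j0 : ℕ) - 1 < 2 ^ n - 1 := by omega
  set i0 : Fin (2 ^ n - 1) := ⟨2 ^ (j0 : ℕ) - 1, hlt⟩ with hi0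
  have hi0v : (i0 : ℕ) + 1 = 2 ^ (j0 : ℕ) :=
    Nat.succ_pred_eq_of_pos h0
  -- pick a prime dividing g i0
  set p := (g i0).minFac with hp
  have hpp : p.Prime := Nat.minFac_prime (hg i0).ne'
  have hpd : p ∣ g i0 := Nat.minFac_dvd _
  -- factorization of each g i at p
  have hfg : ∀ i, (g i).factorization p = if i = i0 then 1 else 0 := by
    intro i
    split_ifs with h
    · subst h
      have ha1 : (g i0).factorization p ≤ 1 := (hsf i0).natFactorization_le_one p
      have ha2 : 1 ≤ (g i0).factorization p :=
        (Nat.Prime.dvd_iff_one_le_factorization hpp (hgne i0)).1 hpd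
      omega
    · rw [Nat.factorization_eq_zero_iff]
      right; left
      intro hpdi
      have hc : Nat.Coprime p (g i0) :=
        Nat.Coprime.coprime_dvd_left hpdi (hcop i i0 h)
      exact hpp.one_lt.ne' (hc.eq_one_of_dvd hpd)
  -- factorization of a j at p
  have hfa : ∀ j, (a j).factorization p = if j = j0 then 1 else 0 := by
    intro j
    rw [ha j, Nat.factorization_prod (fun i _ => hgne i)]
    simp only [Finset.sum_apply', hfg]
    rw [Finset.sum_ite_eq' _ i0 (fun _ => 1)]
    have : Nat.testBit ((i0 : ℕ) + 1) (j : ℕ) = decide ((j0 : ℕ) = (j : ℕ)) := by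
      rw [hi0v, Nat.testBit_two_pow]
    by_cases h : j = j0
    · subst h
      simp [Finset.mem_filter, this]
    · have : ¬ Nat.testBit ((i0 : ℕ) + 1) (j : ℕ) := by
        simp only [this, decide_eq_true_eq]
        exact fun hc => h (Fin.ext hc.symm)
      simp [Finset.mem_filter, this, h]
  -- total factorization is odd
  have htot : (∏ j ∈ J, a j).factorization p = 1 := by
    rw [Nat.factorization_prod (fun j _ => hane j)]
    simp only [Finset.sum_apply', hfa]
    rw [Finset.sum_ite_eq' _ j0 (fun _ => 1)]
    simp [hj0]
  -- but a square has even factorization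
  obtain ⟨r, hr⟩ := hJ
  have hrne : r ≠ 0 := by
    intro h
    rw [h, mul_zero] at hr
    exact (Finset.prod_ne_zero_iff.2 fun j _ => hane j) hr
  rw [hr, Nat.factorization_mul hrne hrne] at htot
  simp at htot
  omega
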